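/- Let G be a connected bipartite graph with parts U and V, and let c : E(G) → ℝ_{>0} be a positive edge weighting such that for every circuit (u_{i_1}, v_{j_1}, ..., u_{i_r}, v_{j_r}, u_{i_1}) of G, the alternating product ∏_{t=1}^r c(u_{i_t} v_{j_t}) / c(u_{i_{t+1}} v_{j_t}) = 1. Then there exist positive functions a : U → ℝ_{>0} and b : V → ℝ_{>0} such that c(uv) = a(u) b(v) for every edge uv ∈ E(G). -/

import Mathlib

set_option autoImplicit false

/-- The simple graph on `U ⊕ V` determined by the edges `E` of a bipartite graph with
endpoint maps `epU`, `epV`. -/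
def edgeGraph {U V E : Type*} (epU : E → U) (epV : E → V) : SimpleGraph (U ⊕ V) where
  Adj x y := ∃ e : E, (x = Sum.inl (epU e) ∧ y = Sum.inr (epV e)) ∨
    (x = Sum.inr (epV e) ∧ y = Sum.inl (epU e))
  symm := by
    constructor
    rintro x y ⟨e, (⟨hx, hy⟩ | ⟨hx, hy⟩)⟩
    · exact ⟨e, Or.inr ⟨hy, hx⟩⟩
    · exact ⟨e, Or.inl ⟨hy, hx⟩⟩
  loopless := by
    constructor
    rintro x ⟨e, (⟨hx, hy⟩ | ⟨hx, hy⟩)⟩ <;> simp_all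

namespace CircuitFactor

open SimpleGraph Walk

variable {U V E : Type*} (epU : E → U) (epV : E → V) (c : E → ℝ)

open Classical in
/-- The log-weight of the (unique) edge between `u` and `v`, or `0` if there is none. -/
noncomputable def psi (u : U) (v : V) : ℝ :=
  if h : ∃ e, epU e = u ∧ epV e = v then Real.log (c h.choose) else 0

/-- Antisymmetric "tension" on ordered pairs of vertices. -/
noncomputable def phi : U ⊕ V → U ⊕ V → ℝ
  | Sum.inl u, Sum.inr v => -psi epU epV c u v
  | Sum.inr v, Sum.inl u => psi epU epV c u v
  | _, _ => 0

lemma phi_antisymm (x y : U ⊕ V) : phi epU epV c x y = -phi epU epV c y x := by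
  rcases x with u | v <;> rcases y with u' | v' <;> simp [phi]

lemma psi_eq (hsimple : ∀ e1 e2 : E, epU e1 = epU e2 → epV e1 = epV e2 → e1 = e2)
    {e : E} {u : U} {v : V} (hu : epU e = u) (hv : epV e = v) :
    psi epU epV c u v = Real.log (c e) := by
  have h : ∃ e', epU e' = u ∧ epV e' = v := ⟨e, hu, hv⟩
  rw [psi, dif_pos h]
  obtain ⟨h1, h2⟩ := h.choose_spec
  rw [hsimple h.choose e (by rw [h1, hu]) (by rw [h2, hv])]

/-- The weight of a walk: the sum of `phi` over its darts. -/
noncomputable def wt {x y : U ⊕ V} (p : (edgeGraph epU epV).Walk x y) : ℝ :=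
  (p.darts.map fun d => phi epU epV c d.fst d.snd).sum

@[simp] lemma wt_nil {x : U ⊕ V} : wt epU epV c (Walk.nil : (edgeGraph epU epV).Walk x x) = 0 := by
  simp [wt]

lemma wt_cons {x y z : U ⊕ V} (h : (edgeGraph epU epV).Adj x y)
    (p : (edgeGraph epU epV).Walk y z) :
    wt epU epV c (Walk.cons h p) = phi epU epV c x y + wt epU epV c p := by
  simp [wt, darts_cons]

lemma wt_append {x y z : U ⊕ V} (p : (edgeGraph epU epV).Walk x y)
    (q : (edgeGraph epU epV).Walk y z) :
    wt epU epV c (p.append q) = wt epU epV c p + wt epU epV c q := by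
  simp [wt, darts_append]

lemma wt_eq_sum {x y : U ⊕ V} (p : (edgeGraph epU epV).Walk x y) :
    wt epU epV c p = ∑ t ∈ Finset.range p.length,
      phi epU epV c (p.getVert t) (p.getVert (t + 1)) := by
  induction p with
  | nil => simp [wt]
  | cons h p ih =>
    rw [wt_cons, ih]
    rw [length_cons, Finset.sum_range_succ']
    have h1 : ∀ t, (Walk.cons h p).getVert (t + 1) = p.getVert t := fun t => rfl
    simp only [show ∀ t : ℕ, 1 + t = t + 1 from fun t => Nat.add_comm 1 t, h1,
      getVert_zero]
    ring

lemma getVert_eq_support_get {x y : U ⊕ V} (p : (edgeGraph epU epV).Walk x y) :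
    ∀ (t : ℕ) (h : t < p.support.length), p.support.get ⟨t, h⟩ = p.getVert t := by
  induction p with
  | nil => intro t h; simp at h; simp [h]
  | cons hadj p ih =>
    intro t h
    cases t with
    | zero => rfl
    | succ t =>
      simp only [support_cons, List.length_cons] at h
      exact ih t (Nat.lt_of_succ_lt_succ h)

lemma sum_range_pairs (f : ℕ → ℝ) (r : ℕ) :
    ∑ t ∈ Finset.range (r + r), f t = ∑ t ∈ Finset.range r, (f (2 * t) + f (2 * t + 1)) := by
  induction r with
  | zero => simp
  | succ r ih =>
    have h : (r + 1) + (r + 1) = ((r + r) + 1) + 1 := by omega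
    rw [h, Finset.sum_range_succ, Finset.sum_range_succ, ih, Finset.sum_range_succ,
      show 2 * r = r + r from two_mul r]
    ring

lemma getVert_alternates {u0 : U} {y : U ⊕ V} (p : (edgeGraph epU epV).Walk (Sum.inl u0) y) :
    ∀ t ≤ p.length, (Even t → ∃ w, p.getVert t = Sum.inl w) ∧
      (¬Even t → ∃ w, p.getVert t = Sum.inr w) := by
  intro t
  induction t with
  | zero =>
    intro _
    exact ⟨fun _ => ⟨u0, p.getVert_zero⟩, fun h => absurd Even.zero h⟩
  | succ t ih =>
    intro ht
    have ht' : t < p.length := ht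
    have ih' := ih (le_of_lt ht')
    obtain ⟨e, he⟩ := p.adj_getVert_succ ht'
    constructor
    · intro hev
      have hodd : ¬Even t := by
        rw [Nat.even_add_one] at hev; exact hev
      obtain ⟨w, hw⟩ := ih'.2 hodd
      rcases he with ⟨h1, h2⟩ | ⟨h1, h2⟩
      · rw [hw] at h1; exact absurd h1 (by simp)
      · exact ⟨_, h2⟩
    · intro hodd
      have hev : Even t := by
        rw [Nat.even_add_one, not_not] at hodd; exact hodd
      obtain ⟨w, hw⟩ := ih'.1 hev
      rcases he with ⟨h1, h2⟩ | ⟨h1, h2⟩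
      · exact ⟨_, h2⟩
      · rw [hw] at h1; exact absurd h1 (by simp)

lemma getVert_injOn {x : U ⊕ V} (p : (edgeGraph epU epV).Walk x x)
    (hnd : p.support.tail.Nodup) :
    ∀ s < p.length, ∀ t < p.length, p.getVert s = p.getVert t → s = t := by
  have hlen : p.support.length = p.length + 1 := p.length_support
  have htail : p.support.tail.length = p.length := by
    simp [List.length_tail, hlen]
  have hget : ∀ (t : ℕ) (h : t < p.support.tail.length),
      p.support.tail.get ⟨t, h⟩ = p.getVert (t + 1) := by
    intro t h
    have h2 : t + 1 < p.support.length := by omega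
    rw [List.get_tail _ _ h h2, getVert_eq_support_get]
  have key : ∀ s t : ℕ, 1 ≤ s → s < t → t ≤ p.length → p.getVert s = p.getVert t → False := by
    intro s t hs hst ht heq
    have h1 : s - 1 < p.support.tail.length := by omega
    have h2 : t - 1 < p.support.tail.length := by omega
    have e1 : p.support.tail.get ⟨s - 1, h1⟩ = p.getVert s := by
      rw [hget]; congr 1; omega
    have e2 : p.support.tail.get ⟨t - 1, h2⟩ = p.getVert t := by
      rw [hget]; congr 1; omega
    have hfin : (⟨s - 1, h1⟩ : Fin _) = ⟨t - 1, h2⟩ :=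
      hnd.get_inj_iff.mp (e1.trans (heq.trans e2.symm))
    have : s - 1 = t - 1 := congrArg Fin.val hfin
    omega
  have hend : p.getVert p.length = x := p.getVert_length
  intro s hs t ht heq
  rcases Nat.lt_trichotomy s t with h | h | h
  · exfalso
    rcases Nat.eq_zero_or_pos s with h0 | h0
    · subst h0
      refine key t p.length (by omega) ht le_rfl ?_
      rw [hend, ← heq, p.getVert_zero]
    · exact key s t h0 h (by omega) heq
  · exact h
  · exfalso
    rcases Nat.eq_zero_or_pos t with h0 | h0
    · subst h0
      refine key s p.length (by omega) hs le_rfl ?_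
      rw [hend, heq, p.getVert_zero]
    · exact key t s h0 h (by omega) heq.symm

lemma wt_rotate {x v : U ⊕ V} (p : (edgeGraph epU epV).Walk x x) (h : v ∈ p.support)
    [DecidableEq (U ⊕ V)] :
    wt epU epV c (p.rotate v h) = wt epU epV c p := by
  have hs := congrArg (wt epU epV c) (p.take_spec h)
  rw [wt_append] at hs
  rw [Walk.rotate, wt_append, add_comm, hs]

lemma length_rotate {x v : U ⊕ V} (p : (edgeGraph epU epV).Walk x x) (h : v ∈ p.support)
    [DecidableEq (U ⊕ V)] :
    (p.rotate v h).length = p.length := by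
  rw [← length_darts, ← length_darts]
  exact (p.rotate_darts v h).perm.length_eq

lemma wt_closed_zero
    (hsimple : ∀ e1 e2 : E, epU e1 = epU e2 → epV e1 = epV e2 → e1 = e2)
    (hc : ∀ e, 0 < c e)
    (hcirc : ∀ (r : ℕ), 2 ≤ r → ∀ (u : ℕ → U) (v : ℕ → V) (a b : ℕ → E),
      (∀ t < r, epU (a t) = u t ∧ epV (a t) = v t) →
      (∀ t < r, epU (b t) = u ((t + 1) % r) ∧ epV (b t) = v t) →
      (∀ s < r, ∀ t < r, u s = u t → s = t) →
      (∀ s < r, ∀ t < r, v s = v t → s = t) →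
      ∏ t ∈ Finset.range r, c (a t) = ∏ t ∈ Finset.range r, c (b t)) :
    ∀ (n : ℕ) (x : U ⊕ V) (p : (edgeGraph epU epV).Walk x x), p.length = n →
      wt epU epV c p = 0 := by
  intro n
  induction n using Nat.strong_induction_on with
  | _ n IH =>
  intro x p hp
  classical
  letI instD : DecidableEq (U ⊕ V) := Classical.decEq _
  letI instB : BEq (U ⊕ V) := @instBEqOfDecidableEq _ instD
  haveI instLB : @LawfulBEq (U ⊕ V) instB :=
    inferInstanceAs (@LawfulBEq (U ⊕ V) (@instBEqOfDecidableEq _ instD))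
  by_cases hnd : p.support.tail.Nodup
  · -- no repeated vertices besides the endpoints
    rcases Nat.lt_or_ge n 3 with hn3 | hn3
    · -- short cases
      interval_cases n
      · -- length 0
        have : p.Nil := SimpleGraph.Walk.nil_iff_length_eq.mpr hp
        cases p with
        | nil => simp
        | cons h q => exact absurd this SimpleGraph.Walk.not_nil_cons
      · -- length 1: a loop, impossible
        exfalso
        have hadj := p.adj_getVert_succ (by omega : 0 < p.length)
        rw [p.getVert_zero, show (0 : ℕ) + 1 = p.length by omega, p.getVert_length] at hadj
        exact (edgeGraph epU epV).irrefl hadj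
      · -- length 2: back and forth, cancels
        rw [wt_eq_sum, hp]
        have h2 : p.getVert 2 = x := by rw [← hp]; exact p.getVert_length
        rw [Finset.sum_range_succ, Finset.sum_range_succ, Finset.sum_range_zero]
        norm_num
        rw [h2, phi_antisymm epU epV c x (p.getVert 1)]
        ring
    · -- a genuine cycle: use the circuit hypothesis
      have key : ∀ (u0 : U) (q : (edgeGraph epU epV).Walk (Sum.inl u0) (Sum.inl u0)),
          q.length = n → q.support.tail.Nodup → wt epU epV c q = 0 := by
        intro u0 q hq hqnd
        have halt := getVert_alternates epU epV q
        have hqend : q.getVert n = Sum.inl u0 := by rw [← hq]; exact q.getVert_length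
        have hev : Even n := by
          by_contra hodd
          obtain ⟨w, hw⟩ := (halt n (by omega)).2 hodd
          rw [hqend] at hw
          simp at hw
        obtain ⟨r, hr⟩ := hev
        have hr2 : 2 ≤ r := by omega
        have hE : ∀ t, t < n → ∃ e : E,
            (q.getVert t = Sum.inl (epU e) ∧ q.getVert (t + 1) = Sum.inr (epV e)) ∨
            (q.getVert t = Sum.inr (epV e) ∧ q.getVert (t + 1) = Sum.inl (epU e)) :=
          fun t ht => q.adj_getVert_succ (by omega)
        obtain ⟨e0, -⟩ := hE 0 (by omega)
        set gu : ℕ → U := fun t => Sum.elim id (fun _ => u0) (q.getVert (2 * t)) with hgudef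
        set gv : ℕ → V := fun t => Sum.elim (fun _ => epV e0) id (q.getVert (2 * t + 1))
          with hgvdef
        have hgu : ∀ t, 2 * t ≤ n → q.getVert (2 * t) = Sum.inl (gu t) := by
          intro t ht
          obtain ⟨w, hw⟩ := (halt (2 * t) (by omega)).1 ⟨t, two_mul t⟩
          rw [hgudef]
          simp only [hw, Sum.elim_inl, id]
        have hgv : ∀ t, 2 * t + 1 ≤ n → q.getVert (2 * t + 1) = Sum.inr (gv t) := by
          intro t ht
          obtain ⟨w, hw⟩ := (halt (2 * t + 1) (by omega)).2 (by simp [Nat.even_add_one, parity_simps])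
          rw [hgvdef]
          simp only [hw, Sum.elim_inr, id]
        have hA : ∀ t : ℕ, ∃ e : E, t < r → (epU e = gu t ∧ epV e = gv t) := by
          intro t
          by_cases ht : t < r
          · obtain ⟨e, he⟩ := hE (2 * t) (by omega)
            refine ⟨e, fun _ => ?_⟩
            rcases he with ⟨h1, h2⟩ | ⟨h1, h2⟩
            · constructor
              · rw [hgu t (by omega)] at h1
                exact (Sum.inl_injective h1).symm
              · rw [hgv t (by omega)] at h2
                exact (Sum.inr_injective h2).symm
            · rw [hgu t (by omega)] at h1
              simp at h1
          · exact ⟨e0, fun h => absurd h ht⟩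
        have hB : ∀ t : ℕ, ∃ e : E, t < r → (epU e = gu (t + 1) ∧ epV e = gv t) := by
          intro t
          by_cases ht : t < r
          · obtain ⟨e, he⟩ := hE (2 * t + 1) (by omega)
            refine ⟨e, fun _ => ?_⟩
            rcases he with ⟨h1, h2⟩ | ⟨h1, h2⟩
            · rw [hgv t (by omega)] at h1
              simp at h1
            · constructor
              · have h2' : q.getVert (2 * (t + 1)) = Sum.inl (epU e) := by
                  rw [show 2 * (t + 1) = 2 * t + 1 + 1 by omega]; exact h2
                rw [hgu (t + 1) (by omega)] at h2'
                exact (Sum.inl_injective h2').symm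
              · rw [hgv t (by omega)] at h1
                exact (Sum.inr_injective h1).symm
          · exact ⟨e0, fun h => absurd h ht⟩
        choose ea hea using hA
        choose eb heb using hB
        have hgu0 : gu 0 = u0 := by
          have := hgu 0 (by omega)
          rw [show 2 * 0 = 0 by omega, q.getVert_zero] at this
          exact (Sum.inl_injective this).symm
        have hgur : gu r = u0 := by
          have := hgu r (by omega)
          rw [show 2 * r = n by omega, hqend] at this
          exact (Sum.inl_injective this.symm)
        have hmod : ∀ t, t < r → gu ((t + 1) % r) = gu (t + 1) := by
          intro t ht
          rcases Nat.lt_or_ge (t + 1) r with h | h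
          · rw [Nat.mod_eq_of_lt h]
          · have h' : t + 1 = r := by omega
            rw [h', Nat.mod_self, hgu0, hgur]
        have hginj := getVert_injOn epU epV q hqnd
        have huinj : ∀ s < r, ∀ t < r, gu s = gu t → s = t := by
          intro s hs t ht h
          have := hginj (2 * s) (by omega) (2 * t) (by omega)
            (by rw [hgu s (by omega), hgu t (by omega), h])
          omega
        have hvinj : ∀ s < r, ∀ t < r, gv s = gv t → s = t := by
          intro s hs t ht h
          have := hginj (2 * s + 1) (by omega) (2 * t + 1) (by omega)
            (by rw [hgv s (by omega), hgv t (by omega), h])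
          omega
        have hprod := hcirc r hr2 gu gv ea eb (fun t ht => hea t ht)
          (fun t ht => ⟨((heb t ht).1).trans (hmod t ht).symm, (heb t ht).2⟩)
          huinj hvinj
        -- compute the weight
        rw [wt_eq_sum, hq, hr, sum_range_pairs]
        have hterm : ∀ t ∈ Finset.range r,
            (phi epU epV c (q.getVert (2 * t)) (q.getVert (2 * t + 1)) +
             phi epU epV c (q.getVert (2 * t + 1)) (q.getVert (2 * t + 1 + 1))) =
            Real.log (c (eb t)) - Real.log (c (ea t)) := by
          intro t ht'
          have ht : t < r := Finset.mem_range.mp ht'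
          rw [hgu t (by omega), hgv t (by omega),
            show 2 * t + 1 + 1 = 2 * (t + 1) by omega, hgu (t + 1) (by omega)]
          show -psi epU epV c (gu t) (gv t) + psi epU epV c (gu (t + 1)) (gv t) = _
          rw [psi_eq epU epV c hsimple (hea t ht).1 (hea t ht).2,
            psi_eq epU epV c hsimple (heb t ht).1 (heb t ht).2]
          ring
        rw [Finset.sum_congr rfl hterm, Finset.sum_sub_distrib,
          ← Real.log_prod (fun t _ => (hc (eb t)).ne'),
          ← Real.log_prod (fun t _ => (hc (ea t)).ne'), hprod, sub_self]
      rcases x with u0 | v0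
      · exact key u0 p hp hnd
      · cases p with
        | nil => simp at hp; omega
        | cons h' p' =>
          rename_i y
          obtain ⟨e, he⟩ := h'
          have hy : y = Sum.inl (epU e) := by
            rcases he with ⟨h1, h2⟩ | ⟨h1, h2⟩
            · exact absurd h1 (by simp)
            · exact h2
          subst hy
          have hmem : Sum.inl (epU e) ∈ (Walk.cons (⟨e, he⟩ :
              (edgeGraph epU epV).Adj (Sum.inr v0) (Sum.inl (epU e))) p').support := by
            exact List.mem_cons_of_mem _ p'.start_mem_support
          rw [← wt_rotate epU epV c _ hmem]
          exact key (epU e) _ ((length_rotate epU epV _ hmem).trans hp)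
            (((support_rotate _ _ hmem).nodup_iff).mpr hnd)
  · -- a repeated interior vertex: split into two shorter closed walks
    obtain ⟨v, hdup⟩ := List.exists_duplicate_iff_not_nodup.mpr hnd
    have hv2 : 2 ≤ List.count v p.support.tail :=
      List.duplicate_iff_two_le_count.mp hdup
    have hvmem : v ∈ p.support := List.mem_of_mem_tail hdup.mem
    have main2 : ∀ (w : (edgeGraph epU epV).Walk v v), w.length = n →
        2 ≤ List.count v w.support.tail →
        wt epU epV c w = 0 := by
      intro w hw hwc
      cases w with
      | nil => simp at hwc
      | cons h' w' =>
        rw [support_cons, List.tail_cons] at hwc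
        have hpos : 0 < List.count v w'.support := by
          omega
        have hvmem' : v ∈ w'.support := List.count_pos_iff.mp hpos
        have hsplit := w'.take_spec hvmem'
        have hc1 : List.count v
            (w'.takeUntil v hvmem').support = 1 :=
          w'.count_support_takeUntil_eq_one hvmem'
        have hcs : List.count v w'.support =
            List.count v (w'.takeUntil v hvmem').support +
            List.count v
              (w'.dropUntil v hvmem').support.tail := by
          conv_lhs => rw [← hsplit]
          rw [support_append]
          exact List.count_append
        have hq2tail : (w'.dropUntil v hvmem').support.tail ≠ [] := by
          intro h0
          rw [h0] at hcs
          simp [hc1] at hcs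
          omega
        have hq2len : 1 ≤ (w'.dropUntil v hvmem').length := by
          by_contra h0
          have : (w'.dropUntil v hvmem').length = 0 := by omega
          have hsl : (w'.dropUntil v hvmem').support.length = 1 := by
            rw [length_support, this]
          apply hq2tail
          rw [← List.length_eq_zero_iff, List.length_tail, hsl]
        have hlensum : (w'.takeUntil v hvmem').length + (w'.dropUntil v hvmem').length
            = w'.length := by
          rw [← congrArg Walk.length hsplit, length_append]
        have hlw : w'.length + 1 = n := by rw [← hw, length_cons]
        have z1 := IH ((Walk.cons h' (w'.takeUntil v hvmem')).length)
          (by rw [length_cons]; omega) _ (Walk.cons h' (w'.takeUntil v hvmem')) rfl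
        have z2 := IH ((w'.dropUntil v hvmem').length) (by omega) _
          (w'.dropUntil v hvmem') rfl
        rw [wt_cons] at z1
        calc wt epU epV c (Walk.cons h' w')
            = wt epU epV c (Walk.cons h' ((w'.takeUntil v hvmem').append
                (w'.dropUntil v hvmem'))) := by rw [hsplit]
          _ = 0 := by
              rw [wt_cons, wt_append, ← add_assoc, z1, z2, add_zero]
    rw [← wt_rotate epU epV c p hvmem]
    exact main2 _ ((length_rotate epU epV p hvmem).trans hp)
      (by rw [(support_rotate p v hvmem).perm.count_eq]; exact hv2)

end CircuitFactor

open CircuitFactor SimpleGraph Walk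

theorem edge_weights_factor_of_circuit_condition
    {U V E : Type*} [Fintype U] [Fintype V] [Fintype E]
    (epU : E → U) (epV : E → V)
    (hsimple : ∀ e1 e2 : E, epU e1 = epU e2 → epV e1 = epV e2 → e1 = e2)
    (hconn : (edgeGraph epU epV).Connected)
    (c : E → ℝ) (hc : ∀ e, 0 < c e)
    (hcirc : ∀ (r : ℕ), 2 ≤ r → ∀ (u : ℕ → U) (v : ℕ → V) (a b : ℕ → E),
      (∀ t < r, epU (a t) = u t ∧ epV (a t) = v t) →
      (∀ t < r, epU (b t) = u ((t + 1) % r) ∧ epV (b t) = v t) →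
      (∀ s < r, ∀ t < r, u s = u t → s = t) →
      (∀ s < r, ∀ t < r, v s = v t → s = t) →
      ∏ t ∈ Finset.range r, c (a t) = ∏ t ∈ Finset.range r, c (b t)) :
    ∃ (a : U → ℝ) (b : V → ℝ), (∀ u, 0 < a u) ∧ (∀ v, 0 < b v) ∧
      ∀ e, c e = a (epU e) * b (epV e) := by
  classical
  obtain ⟨x0⟩ := hconn.nonempty
  have hpre := hconn.preconnected
  let pw : ∀ x : U ⊕ V, (edgeGraph epU epV).Walk x0 x := fun x => (hpre x0 x).some
  let F : U ⊕ V → ℝ := fun x => wt epU epV c (pw x)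
  have hzero := wt_closed_zero epU epV c hsimple hc hcirc
  refine ⟨fun u => Real.exp (F (Sum.inl u)), fun v => Real.exp (-(F (Sum.inr v))),
    fun u => Real.exp_pos _, fun v => Real.exp_pos _, fun e => ?_⟩
  have hadj : (edgeGraph epU epV).Adj (Sum.inl (epU e)) (Sum.inr (epV e)) :=
    ⟨e, Or.inl ⟨rfl, rfl⟩⟩
  have h1 := hzero _ _ ((pw (Sum.inl (epU e))).append
    ((Walk.cons hadj Walk.nil).append (pw (Sum.inr (epV e))).reverse)) rfl
  have h2 := hzero _ _ ((pw (Sum.inr (epV e))).append (pw (Sum.inr (epV e))).reverse) rfl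
  rw [wt_append, wt_append, wt_cons, wt_nil] at h1
  rw [wt_append] at h2
  have hphi : phi epU epV c (Sum.inl (epU e)) (Sum.inr (epV e)) = -Real.log (c e) := by
    show -psi epU epV c (epU e) (epV e) = _
    rw [psi_eq epU epV c hsimple rfl rfl]
  rw [hphi] at h1
  rw [← Real.exp_add, ← Real.exp_log (hc e)]
  congr 1
  show Real.log (c e) = F (Sum.inl (epU e)) + -(F (Sum.inr (epV e)))
  have e1 : F (Sum.inl (epU e)) = wt epU epV c (pw (Sum.inl (epU e))) := rfl
  have e2 : F (Sum.inr (epV e)) = wt epU epV c (pw (Sum.inr (epV e))) := rfl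
  rw [e1, e2]
  linarith
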